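/- Sharp local structure of ℓp balls for p ∈ (0, 1): let d ≥ 1, p ∈ (0, 1), and fix ε with d^{−(2−p)/(2p)} ≤ ε ≤ 1. Set s = ⌈ε^{−2p/(2−p)}⌉. Then the following inclusions hold: ε · conv_p(B_0^d(s) ∩ B₂^d) ⊆ C_d(p, ε) ⊆ 3ε · conv(B_0^d(s) ∩ B₂^d). Consequently, with Φ_{p,ε}(ξ) = sup_{x ∈ C_d(p,ε)} ⟨x, ξ⟩ for ξ ∼ N(0, I_d), one has ε² · E[max_{S ⊆ {1,…,d}, |S| ≤ s} Σ_{i∈S} ξ_i²] ≤ ‖Φ_{p,ε}‖_{L²}² ≤ 9ε² · E[max_{S ⊆ {1,…,d}, |S| ≤ s} Σ_{i∈S} ξ_i²]. -/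

import Mathlib

open MeasureTheory ProbabilityTheory Real Filter Pointwise
open scoped ENNReal NNReal

noncomputable section

/-- The standard Gaussian measure `N(0, I_d)` on `ℝ^d`. -/
def stdGaussian (d : ℕ) : Measure (Fin d → ℝ) :=
  Measure.pi fun _ => gaussianReal 0 1

/-- Squared Euclidean distance on `ℝ^d`. -/
def sqDist {d : ℕ} (x y : Fin d → ℝ) : ℝ := ∑ i, (x i - y i) ^ 2

/-- The ℓp (quasi)norm, for `0 < p < ∞`. -/
def pNorm {d : ℕ} (p : ℝ) (x : Fin d → ℝ) : ℝ := (∑ i, |x i| ^ p) ^ (1 / p)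

/-- The unit ℓp ball in `ℝ^d`. -/
def lpBall (d : ℕ) (p : ℝ) : Set (Fin d → ℝ) := {x | pNorm p x ≤ 1}

/-- `proj` is a Euclidean projection onto `Θ`: it takes values in `Θ` and
minimizes the Euclidean distance to `Θ`. -/
def IsProjOn {d : ℕ} (Θ : Set (Fin d → ℝ)) (proj : (Fin d → ℝ) → Fin d → ℝ) : Prop :=
  ∀ y, proj y ∈ Θ ∧ ∀ ϑ ∈ Θ, sqDist y (proj y) ≤ sqDist y ϑ

/-- The risk `E‖θhat(θ + σξ) − θ‖₂²` of an estimator at `θ`. -/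
def risk {d : ℕ} (θhat : (Fin d → ℝ) → Fin d → ℝ) (σ : ℝ) (θ : Fin d → ℝ) : ℝ≥0∞ :=
  ∫⁻ ξ, ENNReal.ofReal (sqDist (θhat (θ + σ • ξ)) θ) ∂(stdGaussian d)

/-- Worst-case (supremum) risk of an estimator over `Θ`. -/
def supRisk {d : ℕ} (Θ : Set (Fin d → ℝ)) (θhat : (Fin d → ℝ) → Fin d → ℝ) (σ : ℝ) : ℝ≥0∞ :=
  ⨆ θ ∈ Θ, risk θhat σ θ

/-- Minimax risk over `Θ`: infimum over measurable estimators of the worst-case risk. -/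
def minimax {d : ℕ} (Θ : Set (Fin d → ℝ)) (σ : ℝ) : ℝ≥0∞ :=
  ⨅ θhat ∈ {f : (Fin d → ℝ) → Fin d → ℝ | Measurable f}, supRisk Θ θhat σ

open Classical in
/-- The set `B_0^d(s)` of `s`-sparse vectors in `ℝ^d`. -/
def sparseSet (d s : ℕ) : Set (Fin d → ℝ) :=
  {x | (Finset.univ.filter fun i => x i ≠ 0).card ≤ s}

/-- The Euclidean unit ball in `ℝ^d`. -/
def euclBall (d : ℕ) : Set (Fin d → ℝ) := {x | Real.sqrt (∑ i, x i ^ 2) ≤ 1}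

/-- The localized set `C_d(p, ε) = {x : ‖x‖_p^p ≤ 2, ‖x‖₂ ≤ ε}`. -/
def Cset (d : ℕ) (p ε : ℝ) : Set (Fin d → ℝ) :=
  {x | (∑ i, |x i| ^ p) ≤ 2 ∧ Real.sqrt (∑ i, x i ^ 2) ≤ ε}

/-- The `p`-th order convex hull of a set `T ⊆ ℝ^d`. -/
def pConvexHull {d : ℕ} (p : ℝ) (T : Set (Fin d → ℝ)) : Set (Fin d → ℝ) :=
  {x | ∃ (m : ℕ) (lam : Fin m → ℝ) (t : Fin m → Fin d → ℝ),
    (∀ j, t j ∈ T) ∧ (∀ j, 0 ≤ lam j) ∧ (∑ j, lam j ^ p) = 1 ∧ x = ∑ j, lam j • t j}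

/-- The random supremum `Φ_{p,ε}(ξ) = sup_{x ∈ C_d(p,ε)} ⟨x, ξ⟩`. -/
def Phi {d : ℕ} (p ε : ℝ) (ξ : Fin d → ℝ) : ℝ :=
  sSup ((fun x => ∑ i, x i * ξ i) '' Cset d p ε)
namespace LpLocal

open Finset

variable {d : ℕ}

/-! ### Euclidean and ℓ1 helpers -/

def e2 (x : Fin d → ℝ) : ℝ := Real.sqrt (∑ i, x i ^ 2)

lemma e2_nonneg (x : Fin d → ℝ) : 0 ≤ e2 x := Real.sqrt_nonneg _

lemma sq_e2 (x : Fin d → ℝ) : e2 x ^ 2 = ∑ i, x i ^ 2 :=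
  Real.sq_sqrt (by positivity)

lemma sum_sq_le_of_e2_le {x : Fin d → ℝ} {a : ℝ} (ha : 0 ≤ a) (h : e2 x ≤ a) :
    ∑ i, x i ^ 2 ≤ a ^ 2 := by
  rw [← sq_e2 x]
  exact pow_le_pow_left₀ (e2_nonneg x) h 2

lemma e2_eq_norm (x : Fin d → ℝ) :
    e2 x = ‖(EuclideanSpace.equiv (Fin d) ℝ).symm x‖ := by
  simp only [e2, EuclideanSpace.norm_eq, Real.norm_eq_abs, sq_abs]
  rfl

lemma e2_sum_le {ι : Type*} (t : Finset ι) (f : ι → Fin d → ℝ) :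
    e2 (∑ j ∈ t, f j) ≤ ∑ j ∈ t, e2 (f j) := by
  rw [e2_eq_norm, _root_.map_sum ((EuclideanSpace.equiv (Fin d) ℝ).symm) f t]
  refine (norm_sum_le _ _).trans_eq ?_
  exact Finset.sum_congr rfl fun j _ => (e2_eq_norm (f j)).symm

lemma e2_smul (c : ℝ) (x : Fin d → ℝ) : e2 (c • x) = |c| * e2 x := by
  rw [e2_eq_norm, e2_eq_norm, _root_.map_smul ((EuclideanSpace.equiv (Fin d) ℝ).symm) c x, norm_smul, Real.norm_eq_abs]

lemma e2_mono {x y : Fin d → ℝ} (h : ∀ i, x i ^ 2 ≤ y i ^ 2) : e2 x ≤ e2 y :=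
  Real.sqrt_le_sqrt (Finset.sum_le_sum fun i _ => h i)

def l1 (x : Fin d → ℝ) : ℝ := ∑ i, |x i|

lemma l1_nonneg (x : Fin d → ℝ) : 0 ≤ l1 x :=
  Finset.sum_nonneg fun i _ => abs_nonneg _

/-! ### Support and restriction -/

open Classical in
def supp (x : Fin d → ℝ) : Finset (Fin d) := Finset.univ.filter fun i => x i ≠ 0

lemma mem_supp {x : Fin d → ℝ} {i : Fin d} : i ∈ supp x ↔ x i ≠ 0 := by
  simp [supp]

lemma not_mem_supp {x : Fin d → ℝ} {i : Fin d} : i ∉ supp x ↔ x i = 0 := by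
  simp [mem_supp]

lemma mem_sparseSet_iff {s : ℕ} {x : Fin d → ℝ} :
    x ∈ sparseSet d s ↔ (supp x).card ≤ s := Iff.rfl

lemma mem_euclBall_iff {x : Fin d → ℝ} : x ∈ euclBall d ↔ e2 x ≤ 1 := Iff.rfl

def restr (S : Finset (Fin d)) (x : Fin d → ℝ) : Fin d → ℝ :=
  fun i => if i ∈ S then x i else 0

lemma supp_restr_subset (S : Finset (Fin d)) (x : Fin d → ℝ) : supp (restr S x) ⊆ S := by
  intro i hi
  rw [mem_supp] at hi
  by_contra h
  exact hi (by simp [restr, h])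

lemma restr_add_compl (S : Finset (Fin d)) (x : Fin d → ℝ) :
    restr S x + restr Sᶜ x = x := by
  funext i
  by_cases h : i ∈ S <;> simp [restr, h]

lemma sum_sq_restr (S : Finset (Fin d)) (x : Fin d → ℝ) :
    ∑ i, restr S x i ^ 2 = ∑ i ∈ S, x i ^ 2 := by
  calc ∑ i, restr S x i ^ 2 = ∑ i, (if i ∈ S then x i ^ 2 else 0) := by
        refine Finset.sum_congr rfl fun i _ => ?_
        by_cases h : i ∈ S <;> simp [restr, h]
    _ = ∑ i ∈ Finset.univ ∩ S, x i ^ 2 := Finset.sum_ite_mem _ _ _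
    _ = ∑ i ∈ S, x i ^ 2 := by rw [Finset.univ_inter]

lemma l1_restr (S : Finset (Fin d)) (x : Fin d → ℝ) :
    l1 (restr S x) = ∑ i ∈ S, |x i| := by
  calc ∑ i, |restr S x i| = ∑ i, (if i ∈ S then |x i| else 0) := by
        refine Finset.sum_congr rfl fun i _ => ?_
        by_cases h : i ∈ S <;> simp [restr, h]
    _ = ∑ i ∈ Finset.univ ∩ S, |x i| := Finset.sum_ite_mem _ _ _
    _ = ∑ i ∈ S, |x i| := by rw [Finset.univ_inter]

lemma l1_restr_add_compl (S : Finset (Fin d)) (x : Fin d → ℝ) :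
    l1 (restr S x) + l1 (restr Sᶜ x) = l1 x := by
  rw [l1_restr, l1_restr, l1]
  rw [Finset.sum_add_sum_compl]

end LpLocal
namespace LpLocal

open Finset

variable {d : ℕ} {p : ℝ}

/-! ### rpow helpers -/

lemma add_rpow_le {a b : ℝ} (hp0 : 0 < p) (hp1 : p ≤ 1) (ha : 0 ≤ a) (hb : 0 ≤ b) :
    (a + b) ^ p ≤ a ^ p + b ^ p := by
  have h := NNReal.rpow_add_le_add_rpow a.toNNReal b.toNNReal hp0.le hp1
  have h2 := NNReal.coe_le_coe.2 h
  push_cast at h2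
  rwa [Real.coe_toNNReal a ha, Real.coe_toNNReal b hb] at h2

lemma abs_sum_rpow_le (hp0 : 0 < p) (hp1 : p ≤ 1) {ι : Type*} (t : Finset ι) (f : ι → ℝ) :
    |∑ j ∈ t, f j| ^ p ≤ ∑ j ∈ t, |f j| ^ p := by
  induction t using Finset.cons_induction with
  | empty => simp [Real.zero_rpow hp0.ne']
  | cons a t ha ih =>
    rw [Finset.sum_cons, Finset.sum_cons]
    calc |f a + ∑ j ∈ t, f j| ^ p ≤ (|f a| + |∑ j ∈ t, f j|) ^ p :=
          Real.rpow_le_rpow (abs_nonneg _) (abs_add_le _ _) hp0.le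
      _ ≤ |f a| ^ p + |∑ j ∈ t, f j| ^ p :=
          add_rpow_le hp0 hp1 (abs_nonneg _) (abs_nonneg _)
      _ ≤ |f a| ^ p + ∑ j ∈ t, |f j| ^ p := add_le_add_right ih _

lemma self_le_rpow {a : ℝ} (hp0 : 0 < p) (hp1 : p ≤ 1) (ha : 0 ≤ a) (ha1 : a ≤ 1) :
    a ≤ a ^ p := by
  rcases ha.eq_or_lt with h | h
  · rw [← h]
    exact Real.rpow_nonneg le_rfl p
  · calc a = a ^ (1 : ℝ) := (Real.rpow_one a).symm
      _ ≤ a ^ p := Real.rpow_le_rpow_of_exponent_ge h ha1 hp1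

/-- Hölder: `∑_{i ∈ S} |t i|^p ≤ |S|^{(2-p)/2} (∑_{i ∈ S} t i²)^{p/2}`. -/
lemma sum_abs_rpow_le_card (hp0 : 0 < p) (hp2 : p < 2) (S : Finset (Fin d)) (t : Fin d → ℝ) :
    ∑ i ∈ S, |t i| ^ p ≤ (S.card : ℝ) ^ ((2 - p) / 2) * (∑ i ∈ S, t i ^ 2) ^ (p / 2) := by
  have hpq : Real.HolderConjugate (2 / p) (2 / (2 - p)) := by
    rw [Real.holderConjugate_iff]
    constructor
    · rw [lt_div_iff₀ hp0]; linarith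
    · rw [inv_div, inv_div]; field_simp; ring
  have H := Real.inner_le_Lp_mul_Lq (s := S) (fun i => |t i| ^ p) (fun _ => (1 : ℝ)) hpq
  simp only [mul_one] at H
  have e1 : ∀ i : Fin d, |(|t i| ^ p)| ^ (2 / p) = t i ^ 2 := by
    intro i
    rw [abs_of_nonneg (Real.rpow_nonneg (abs_nonneg _) _), ← Real.rpow_mul (abs_nonneg _),
      ← sq_abs (t i), ← Real.rpow_natCast (|t i|) 2]
    congr 1
    push_cast
    field_simp
  simp only [e1, abs_one, Real.one_rpow, Finset.sum_const, nsmul_eq_mul, mul_one] at H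
  rw [one_div_div, one_div_div] at H
  exact H.trans_eq (mul_comm _ _)

/-- Interpolation: `‖x‖₁ ≤ (∑ |x|^p)^{1/(2-p)} (∑ x²)^{(1-p)/(2-p)}`. -/
lemma l1_le_interp (hp0 : 0 < p) (hp1 : p < 1) (x : Fin d → ℝ) :
    l1 x ≤ (∑ i, |x i| ^ p) ^ (1 / (2 - p)) * (∑ i, x i ^ 2) ^ ((1 - p) / (2 - p)) := by
  have h2p : (0:ℝ) < 2 - p := by linarith
  have h1p : (0:ℝ) < 1 - p := by linarith
  have hpq : Real.HolderConjugate (2 - p) ((2 - p) / (1 - p)) := by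
    rw [Real.holderConjugate_iff]
    constructor
    · linarith
    · rw [inv_div]; field_simp; ring
  have H := Real.inner_le_Lp_mul_Lq (s := (Finset.univ : Finset (Fin d)))
    (fun i => |x i| ^ (p / (2 - p))) (fun i => |x i| ^ ((2 - 2 * p) / (2 - p))) hpq
  have e0 : ∀ i : Fin d, |x i| ^ (p / (2 - p)) * |x i| ^ ((2 - 2 * p) / (2 - p)) = |x i| := by
    intro i
    rcases eq_or_ne (x i) 0 with h | h
    · rw [h, abs_zero, Real.zero_rpow (div_ne_zero hp0.ne' (by linarith)),
        Real.zero_rpow (div_ne_zero (by linarith) (by linarith)), mul_zero]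
    · rw [← Real.rpow_add (abs_pos.2 h)]
      have : p / (2 - p) + (2 - 2 * p) / (2 - p) = 1 := by field_simp; ring
      rw [this, Real.rpow_one]
  have e1 : ∀ i : Fin d, |(|x i| ^ (p / (2 - p)))| ^ (2 - p) = |x i| ^ p := by
    intro i
    rw [abs_of_nonneg (Real.rpow_nonneg (abs_nonneg _) _), ← Real.rpow_mul (abs_nonneg _)]
    congr 1
    field_simp
  have e2' : ∀ i : Fin d, |(|x i| ^ ((2 - 2 * p) / (2 - p)))| ^ ((2 - p) / (1 - p)) = x i ^ 2 := by
    intro i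
    rw [abs_of_nonneg (Real.rpow_nonneg (abs_nonneg _) _), ← Real.rpow_mul (abs_nonneg _),
      ← sq_abs (x i), ← Real.rpow_natCast (|x i|) 2]
    congr 1
    push_cast
    field_simp
  simp only [e0, e1, e2'] at H
  have hq : 1 / ((2 - p) / (1 - p)) = (1 - p) / (2 - p) := one_div_div _ _
  rw [hq] at H
  exact H

end LpLocal
namespace LpLocal

open Finset

variable {d s : ℕ}

/-! ### Sparse decompositions -/

def Rep (d s : ℕ) (C : ℝ) (x : Fin d → ℝ) : Prop :=
  ∃ (n : ℕ) (c : Fin n → ℝ) (t : Fin n → Fin d → ℝ),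
    (∀ j, 0 ≤ c j) ∧ (∀ j, t j ∈ sparseSet d s ∩ euclBall d) ∧
    (∑ j, c j) ≤ C ∧ x = ∑ j, c j • t j

lemma Rep.mono {C C' : ℝ} {x : Fin d → ℝ} (h : Rep d s C x) (hC : C ≤ C') : Rep d s C' x := by
  obtain ⟨n, c, t, h1, h2, h3, h4⟩ := h
  exact ⟨n, c, t, h1, h2, h3.trans hC, h4⟩

lemma Rep.zero : Rep d s 0 (0 : Fin d → ℝ) := by
  refine ⟨0, fun j => 0, fun j => 0, fun j => le_rfl, fun j => j.elim0, by simp, by simp⟩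

lemma Rep.single {y : Fin d → ℝ} (h : (supp y).card ≤ s) : Rep d s (e2 y) y := by
  rcases eq_or_ne y 0 with rfl | hy
  · have : e2 (0 : Fin d → ℝ) = 0 := by simp [e2]
    rw [this]; exact Rep.zero
  · have hpos : 0 < e2 y := by
      rcases Function.ne_iff.1 hy with ⟨i, hi⟩
      refine Real.sqrt_pos.2 (Finset.sum_pos' (fun j _ => sq_nonneg _) ⟨i, Finset.mem_univ i, ?_⟩)
      simpa using pow_pos (abs_pos.2 hi) 2 |>.trans_eq (sq_abs _)
    refine ⟨1, fun _ => e2 y, fun _ => (e2 y)⁻¹ • y, fun _ => hpos.le, fun _ => ⟨?_, ?_⟩, ?_, ?_⟩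
    · rw [mem_sparseSet_iff]
      refine le_trans (Finset.card_le_card ?_) h
      intro i hi
      rw [mem_supp] at hi ⊢
      intro h0
      exact hi (by simp [h0])
    · rw [mem_euclBall_iff]
      show e2 ((e2 y)⁻¹ • y) ≤ 1
      rw [e2_smul, abs_of_nonneg (inv_nonneg.2 hpos.le), inv_mul_cancel₀ hpos.ne']
    · simp
    · rw [Fin.sum_univ_one, smul_inv_smul₀ hpos.ne']

lemma Rep.add {C C' : ℝ} {x x' : Fin d → ℝ} (h : Rep d s C x) (h' : Rep d s C' x') :
    Rep d s (C + C') (x + x') := by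
  obtain ⟨n, c, t, h1, h2, h3, h4⟩ := h
  obtain ⟨n', c', t', h1', h2', h3', h4'⟩ := h'
  refine ⟨n + n', Fin.append c c', Fin.append t t', ?_, ?_, ?_, ?_⟩
  · intro j
    refine Fin.addCases (fun i => ?_) (fun i => ?_) j
    · rw [Fin.append_left]; exact h1 i
    · rw [Fin.append_right]; exact h1' i
  · intro j
    refine Fin.addCases (fun i => ?_) (fun i => ?_) j
    · rw [Fin.append_left]; exact h2 i
    · rw [Fin.append_right]; exact h2' i
  · rw [Fin.sum_univ_add]
    simp only [Fin.append_left, Fin.append_right]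
    exact add_le_add h3 h3'
  · rw [Fin.sum_univ_add]
    simp only [Fin.append_left, Fin.append_right]
    rw [h4, h4']

lemma zero_mem_T : (0 : Fin d → ℝ) ∈ sparseSet d s ∩ euclBall d := by
  constructor
  · rw [mem_sparseSet_iff]
    have : supp (0 : Fin d → ℝ) = ∅ := by
      ext i; simp [mem_supp]
    simp [this]
  · rw [mem_euclBall_iff]
    simp [e2]

lemma Rep.mem_smul_convexHull {C : ℝ} {x : Fin d → ℝ} (h : Rep d s C x) (hC : 0 < C) :
    x ∈ C • convexHull ℝ (sparseSet d s ∩ euclBall d) := by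
  obtain ⟨n, c, t, h1, h2, h3, h4⟩ := h
  set w : Fin (n + 1) → ℝ := Fin.cons (C - ∑ j, c j) c with hw
  set z : Fin (n + 1) → Fin d → ℝ := Fin.cons 0 t with hz
  have hw0 : ∀ j ∈ Finset.univ, 0 ≤ w j := by
    intro j _
    refine Fin.cases ?_ (fun i => ?_) j
    · rw [hw, Fin.cons_zero]; linarith
    · rw [hw, Fin.cons_succ]; exact h1 i
  have hwsum : ∑ j, w j = C := by
    rw [hw, Fin.sum_cons]; ring
  have hzmem : ∀ j ∈ Finset.univ, z j ∈ sparseSet d s ∩ euclBall d := by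
    intro j _
    refine Fin.cases ?_ (fun i => ?_) j
    · rw [hz, Fin.cons_zero]; exact zero_mem_T
    · rw [hz, Fin.cons_succ]; exact h2 i
  have hmem := Finset.centerMass_mem_convexHull (Finset.univ : Finset (Fin (n + 1)))
    hw0 (by rw [hwsum]; exact hC) hzmem
  have hcm : Finset.univ.centerMass w z = C⁻¹ • x := by
    rw [Finset.centerMass, hwsum]
    congr 1
    rw [hw, hz, Fin.sum_univ_succ]
    simp only [Fin.cons_zero, Fin.cons_succ, smul_zero, zero_add]
    rw [h4]
  rw [hcm] at hmem
  have : x = C • (C⁻¹ • x) := (smul_inv_smul₀ hC.ne' x).symm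
  rw [this]
  exact Set.smul_mem_smul_set hmem

lemma exists_top_subset (x : Fin d → ℝ) {k : ℕ} (hk : k ≤ d) :
    ∃ S : Finset (Fin d), S.card = k ∧ ∀ i ∈ S, ∀ j, j ∉ S → |x j| ≤ |x i| := by
  obtain ⟨S₀, -, hS₀⟩ := Finset.exists_subset_card_eq (s := (Finset.univ : Finset (Fin d))) (n := k)
    (by simpa using hk)
  classical
  set 𝒮 : Finset (Finset (Fin d)) := Finset.univ.filter fun S => S.card = k with h𝒮def
  have h𝒮 : 𝒮.Nonempty := ⟨S₀, by simp [h𝒮def, hS₀]⟩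
  obtain ⟨S, hSmem, hmax⟩ := Finset.exists_max_image 𝒮 (fun S => ∑ i ∈ S, |x i|) h𝒮
  have hcard : S.card = k := by simpa [h𝒮def] using hSmem
  refine ⟨S, hcard, ?_⟩
  intro i hi j hj
  by_contra hlt
  push_neg at hlt
  have hj' : j ∉ S.erase i := fun h => hj (Finset.mem_of_mem_erase h)
  have hk1 : 1 ≤ k := hcard ▸ Finset.card_pos.2 ⟨i, hi⟩
  have hcard' : (insert j (S.erase i)).card = k := by
    rw [Finset.card_insert_of_notMem hj', Finset.card_erase_of_mem hi, hcard]
    omega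
  have hmem' : insert j (S.erase i) ∈ 𝒮 := by simp [h𝒮def, hcard']
  have hle := hmax _ hmem'
  rw [Finset.sum_insert hj', Finset.sum_erase_eq_sub hi] at hle
  linarith

lemma e2_le_sqrt_mul {y : Fin d → ℝ} {μ : ℝ} (hμ : 0 ≤ μ) (h : (supp y).card ≤ s)
    (hb : ∀ i, |y i| ≤ μ) : e2 y ≤ Real.sqrt s * μ := by
  have h1 : ∑ i, y i ^ 2 ≤ (s : ℝ) * μ ^ 2 := by
    have h2 : ∑ i, y i ^ 2 = ∑ i ∈ supp y, y i ^ 2 := by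
      refine (Finset.sum_subset (Finset.subset_univ _) fun i _ hi => ?_).symm
      rw [not_mem_supp.1 hi]; ring
    rw [h2]
    calc ∑ i ∈ supp y, y i ^ 2 ≤ ∑ i ∈ supp y, μ ^ 2 := by
          refine Finset.sum_le_sum fun i _ => ?_
          rw [← sq_abs]
          exact pow_le_pow_left₀ (abs_nonneg _) (hb i) 2
      _ = ((supp y).card : ℝ) * μ ^ 2 := by rw [Finset.sum_const, nsmul_eq_mul]
      _ ≤ (s : ℝ) * μ ^ 2 := by
          apply mul_le_mul_of_nonneg_right _ (sq_nonneg μ)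
          exact_mod_cast h
  calc e2 y ≤ Real.sqrt ((s : ℝ) * μ ^ 2) := Real.sqrt_le_sqrt h1
    _ = Real.sqrt s * μ := by
        rw [Real.sqrt_mul (Nat.cast_nonneg s), Real.sqrt_sq hμ]

lemma rep_small {x : Fin d → ℝ} {μ : ℝ} (hμ : 0 ≤ μ) (h : (supp x).card ≤ s)
    (hb : ∀ i, |x i| ≤ μ) :
    Rep d s (Real.sqrt s * μ + l1 x / Real.sqrt s) x := by
  refine (Rep.single h).mono ?_
  have := e2_le_sqrt_mul hμ h hb
  have h2 : 0 ≤ l1 x / Real.sqrt s := div_nonneg (l1_nonneg x) (Real.sqrt_nonneg _)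
  linarith

/-- The peeling step: splitting off the top-`s` coordinates. -/
lemma rep_peel (hs1 : 1 ≤ s) {x : Fin d → ℝ} (hbig : s < (supp x).card)
    (IH : ∀ (x' : Fin d → ℝ) (μ' : ℝ), 0 ≤ μ' → (∀ i, |x' i| ≤ μ') →
      (supp x').card + 1 ≤ (supp x).card →
      Rep d s (Real.sqrt s * μ' + l1 x' / Real.sqrt s) x') :
    ∃ S : Finset (Fin d), S.card = s ∧ S ⊆ supp x ∧
      Rep d s (e2 (restr S x) + l1 x / Real.sqrt s) x := by
  have hspos : (0:ℝ) < s := by exact_mod_cast hs1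
  have hsq : 0 < Real.sqrt s := Real.sqrt_pos.2 hspos
  have hsd : s ≤ d := le_trans hbig.le (by simpa using Finset.card_le_univ (supp x))
  obtain ⟨S, hScard, htop⟩ := exists_top_subset x hsd
  have hSsub : S ⊆ supp x := by
    intro i hi
    rw [mem_supp]
    intro h0
    have hsub : supp x ⊆ S := by
      intro j hj
      by_contra hjS
      have := htop i hi j hjS
      rw [h0, abs_zero] at this
      exact (mem_supp.1 hj) (abs_eq_zero.1 (le_antisymm this (abs_nonneg _)))
    exact absurd (Finset.card_le_card hsub) (by omega)
  set y := restr S x with hy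
  set x' := restr Sᶜ x with hx'
  have hsplit : y + x' = x := restr_add_compl S x
  -- bound on the sup-norm of the remainder
  set μ' := l1 y / s with hμ'
  have hl1y : l1 y = ∑ i ∈ S, |x i| := l1_restr S x
  have hμ'0 : 0 ≤ μ' := div_nonneg (l1_nonneg y) hspos.le
  have hx'b : ∀ i, |x' i| ≤ μ' := by
    intro i
    by_cases hi : i ∈ S
    · have : x' i = 0 := by simp [hx', restr, hi]
      rw [this, abs_zero]; exact hμ'0
    · have hxi : x' i = x i := by simp [hx', restr, hi]
      have hkey : (s : ℝ) * |x i| ≤ l1 y := by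
        rw [hl1y]
        calc (s : ℝ) * |x i| = ∑ _j ∈ S, |x i| := by
              rw [Finset.sum_const, nsmul_eq_mul, hScard]
          _ ≤ ∑ j ∈ S, |x j| := Finset.sum_le_sum fun j hj => htop j hj i hi
      rw [hxi, hμ', le_div_iff₀ hspos]
      linarith
  have hcard' : (supp x').card + 1 ≤ (supp x).card := by
    have hsub' : supp x' ⊆ supp x \ S := by
      intro i hi
      rw [mem_supp] at hi
      rcases Finset.mem_compl.1 (supp_restr_subset Sᶜ x (mem_supp.2 hi)) with hiS
      refine Finset.mem_sdiff.2 ⟨?_, hiS⟩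
      rw [mem_supp]
      intro h0
      exact hi (by simp [hx', restr, h0])
    have := Finset.card_le_card hsub'
    rw [Finset.card_sdiff_of_subset hSsub] at this
    omega
  have h1 := IH x' μ' hμ'0 hx'b hcard'
  have h2 := Rep.single (s := s)
    (le_trans (Finset.card_le_card (supp_restr_subset S x)) hScard.le)
  have h3 := h2.add h1
  rw [hsplit] at h3
  refine ⟨S, hScard, hSsub, h3.mono ?_⟩
  have hμeq : Real.sqrt s * μ' = l1 y / Real.sqrt s := by
    rw [hμ', eq_div_iff hsq.ne']
    field_simp
    rw [Real.sq_sqrt hspos.le, mul_comm]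
  have hsum : l1 y / Real.sqrt s + l1 x' / Real.sqrt s = l1 x / Real.sqrt s := by
    rw [← add_div, l1_restr_add_compl]
  linarith [hμeq, hsum]

lemma rep_aux (hs1 : 1 ≤ s) :
    ∀ n (x : Fin d → ℝ) (μ : ℝ), 0 ≤ μ → (∀ i, |x i| ≤ μ) → (supp x).card ≤ n →
      Rep d s (Real.sqrt s * μ + l1 x / Real.sqrt s) x := by
  intro n
  induction n with
  | zero =>
    intro x μ hμ hb hcard
    exact rep_small hμ (le_trans hcard (by omega)) hb
  | succ n ih =>
    intro x μ hμ hb hcard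
    by_cases hsmall : (supp x).card ≤ s
    · exact rep_small hμ hsmall hb
    · push_neg at hsmall
      obtain ⟨S, hScard, hSsub, hrep⟩ := rep_peel hs1 hsmall
        (fun x' μ' hμ' hb' hc' => ih x' μ' hμ' hb' (by omega))
      refine hrep.mono ?_
      have h1 : e2 (restr S x) ≤ Real.sqrt s * μ :=
        e2_le_sqrt_mul hμ (le_trans (Finset.card_le_card (supp_restr_subset S x)) hScard.le)
          (fun i => by
            by_cases hi : i ∈ S
            · simpa [restr, hi] using hb i
            · simp [restr, hi, hμ])
      linarith

lemma rep_total (hs1 : 1 ≤ s) (x : Fin d → ℝ) :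
    Rep d s (e2 x + l1 x / Real.sqrt s) x := by
  by_cases hsmall : (supp x).card ≤ s
  · refine (Rep.single hsmall).mono ?_
    have : 0 ≤ l1 x / Real.sqrt s := div_nonneg (l1_nonneg x) (Real.sqrt_nonneg _)
    linarith
  · push_neg at hsmall
    obtain ⟨S, hScard, hSsub, hrep⟩ := rep_peel hs1 hsmall
      (fun x' μ' hμ' hb' _ => rep_aux hs1 (supp x').card x' μ' hμ' hb' le_rfl)
    refine hrep.mono ?_
    have h1 : e2 (restr S x) ≤ e2 x := by
      refine e2_mono fun i => ?_
      by_cases hi : i ∈ S <;> simp [restr, hi, sq_nonneg]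
    linarith

end LpLocal
namespace LpLocal

open Finset

variable {d s : ℕ} {p ε : ℝ}

/-! ### Arithmetic facts about `s = ⌈ε^{-2p/(2-p)}⌉` -/

lemma keyA (hp0 : 0 < p) (hp1 : p < 1) (hε0 : 0 < ε) (hε2 : ε ≤ 1)
    (hs : s = ⌈ε ^ (-(2 * p) / (2 - p))⌉₊) : ε ^ p * (s : ℝ) ^ ((2 - p) / 2) ≤ 2 := by
  have h2p : (0:ℝ) < 2 - p := by linarith
  set q : ℝ := -(2 * p) / (2 - p) with hq
  have hqneg : q ≤ 0 := div_nonpos_of_nonpos_of_nonneg (by linarith) h2p.le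
  have ht1 : 1 ≤ ε ^ q := Real.one_le_rpow_of_pos_of_le_one_of_nonpos hε0 hε2 hqneg
  have hst : (s : ℝ) ≤ 2 * ε ^ q := by
    have h1 : (s : ℝ) < ε ^ q + 1 := by
      rw [hs]
      exact_mod_cast Nat.ceil_lt_add_one (Real.rpow_nonneg hε0.le q)
    linarith
  have hexp : (0:ℝ) ≤ (2 - p) / 2 := by positivity
  calc ε ^ p * (s : ℝ) ^ ((2 - p) / 2)
      ≤ ε ^ p * (2 * ε ^ q) ^ ((2 - p) / 2) := by
        refine mul_le_mul_of_nonneg_left ?_ (Real.rpow_nonneg hε0.le p)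
        exact Real.rpow_le_rpow (Nat.cast_nonneg s) hst hexp
    _ = 2 ^ ((2 - p) / 2) * (ε ^ p * (ε ^ q) ^ ((2 - p) / 2)) := by
        rw [Real.mul_rpow (by norm_num) (Real.rpow_nonneg hε0.le q)]
        ring
    _ = 2 ^ ((2 - p) / 2) * 1 := by
        congr 1
        rw [← Real.rpow_mul hε0.le, ← Real.rpow_add hε0]
        have : p + q * ((2 - p) / 2) = 0 := by
          rw [hq]; field_simp; ring
        rw [this, Real.rpow_zero]
    _ ≤ 2 := by
        rw [mul_one]
        calc (2:ℝ) ^ ((2 - p) / 2) ≤ 2 ^ (1:ℝ) := by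
              refine Real.rpow_le_rpow_of_exponent_le one_le_two ?_
              linarith
          _ = 2 := Real.rpow_one 2
  
lemma keyB (hp0 : 0 < p) (hp1 : p < 1) (hε0 : 0 < ε)
    (hs : s = ⌈ε ^ (-(2 * p) / (2 - p))⌉₊) :
    1 / Real.sqrt s ≤ ε ^ (p / (2 - p)) := by
  have h2p : (0:ℝ) < 2 - p := by linarith
  set q : ℝ := -(2 * p) / (2 - p) with hq
  have hts : ε ^ q ≤ (s : ℝ) := by
    rw [hs]; exact_mod_cast Nat.le_ceil _
  have hsq : Real.sqrt (ε ^ q) = ε ^ (-(p / (2 - p))) := by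
    rw [Real.sqrt_eq_rpow, ← Real.rpow_mul hε0.le]
    congr 1
    rw [hq]; field_simp
  have hpos : 0 < ε ^ (-(p / (2 - p))) := Real.rpow_pos_of_pos hε0 _
  have h1 : ε ^ (-(p / (2 - p))) ≤ Real.sqrt s := by
    rw [← hsq]; exact Real.sqrt_le_sqrt hts
  calc 1 / Real.sqrt s ≤ 1 / ε ^ (-(p / (2 - p))) := one_div_le_one_div_of_le hpos h1
    _ = ε ^ (p / (2 - p)) := by
        rw [one_div, ← Real.rpow_neg hε0.le, neg_neg]

/-! ### Membership lemmas for `Cset` -/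

lemma sparse_sum_rpow (hp0 : 0 < p) (hp2 : p < 2) {t : Fin d → ℝ}
    (ht : t ∈ sparseSet d s ∩ euclBall d) : ∑ i, |t i| ^ p ≤ (s : ℝ) ^ ((2 - p) / 2) := by
  obtain ⟨ht1, ht2⟩ := ht
  rw [mem_sparseSet_iff] at ht1
  rw [mem_euclBall_iff] at ht2
  have hsum1 : ∑ i, t i ^ 2 ≤ 1 := by
    simpa using sum_sq_le_of_e2_le zero_le_one ht2
  have h0 : ∑ i, |t i| ^ p = ∑ i ∈ supp t, |t i| ^ p := by
    refine (Finset.sum_subset (Finset.subset_univ _) fun i _ hi => ?_).symm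
    rw [not_mem_supp.1 hi, abs_zero, Real.zero_rpow hp0.ne']
  rw [h0]
  calc ∑ i ∈ supp t, |t i| ^ p
      ≤ ((supp t).card : ℝ) ^ ((2 - p) / 2) * (∑ i ∈ supp t, t i ^ 2) ^ (p / 2) :=
        sum_abs_rpow_le_card hp0 hp2 _ t
    _ ≤ (s : ℝ) ^ ((2 - p) / 2) * 1 := by
        refine mul_le_mul ?_ ?_ (Real.rpow_nonneg (Finset.sum_nonneg fun i _ => sq_nonneg _) _)
          (Real.rpow_nonneg (Nat.cast_nonneg s) _)
        · exact Real.rpow_le_rpow (Nat.cast_nonneg _) (by exact_mod_cast ht1)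
            (div_nonneg (by linarith) (by norm_num))
        · refine Real.rpow_le_one (Finset.sum_nonneg fun i _ => sq_nonneg _) ?_
            (div_nonneg hp0.le (by norm_num))
          refine le_trans ?_ hsum1
          exact Finset.sum_le_sum_of_subset_of_nonneg (Finset.subset_univ _)
            fun i _ _ => sq_nonneg _
    _ = (s : ℝ) ^ ((2 - p) / 2) := mul_one _

lemma mem_Cset_sparse (hp0 : 0 < p) (hp2 : p < 2) (hε0 : 0 ≤ ε)
    (hkey : ε ^ p * (s : ℝ) ^ ((2 - p) / 2) ≤ 2) {x : Fin d → ℝ}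
    (hcard : (supp x).card ≤ s) (hsum : ∑ i, x i ^ 2 ≤ ε ^ 2) : x ∈ Cset d p ε := by
  constructor
  · -- ℓp part
    have h0 : ∑ i, |x i| ^ p = ∑ i ∈ supp x, |x i| ^ p := by
      refine (Finset.sum_subset (Finset.subset_univ _) fun i _ hi => ?_).symm
      rw [not_mem_supp.1 hi, abs_zero, Real.zero_rpow hp0.ne']
    rw [h0]
    calc ∑ i ∈ supp x, |x i| ^ p
        ≤ ((supp x).card : ℝ) ^ ((2 - p) / 2) * (∑ i ∈ supp x, x i ^ 2) ^ (p / 2) :=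
          sum_abs_rpow_le_card hp0 hp2 _ x
      _ ≤ (s : ℝ) ^ ((2 - p) / 2) * (ε ^ 2) ^ (p / 2) := by
          refine mul_le_mul ?_ ?_
            (Real.rpow_nonneg (Finset.sum_nonneg fun i _ => sq_nonneg _) _)
            (Real.rpow_nonneg (Nat.cast_nonneg s) _)
          · exact Real.rpow_le_rpow (Nat.cast_nonneg _) (by exact_mod_cast hcard)
              (div_nonneg (by linarith) (by norm_num))
          · refine Real.rpow_le_rpow (Finset.sum_nonneg fun i _ => sq_nonneg _) ?_
              (div_nonneg hp0.le (by norm_num))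
            refine le_trans ?_ hsum
            exact Finset.sum_le_sum_of_subset_of_nonneg (Finset.subset_univ _)
              fun i _ _ => sq_nonneg _
      _ = (s : ℝ) ^ ((2 - p) / 2) * ε ^ p := by
          congr 1
          rw [← Real.rpow_natCast ε 2, ← Real.rpow_mul hε0]
          congr 1
          push_cast
          ring
      _ ≤ 2 := by rw [mul_comm]; exact hkey
  · -- ℓ2 part
    show Real.sqrt (∑ i, x i ^ 2) ≤ ε
    calc Real.sqrt (∑ i, x i ^ 2) ≤ Real.sqrt (ε ^ 2) := Real.sqrt_le_sqrt hsum
      _ = ε := Real.sqrt_sq hε0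

/-! ### The two inclusions -/

lemma incl1 (hp0 : 0 < p) (hp1 : p < 1) (hε0 : 0 < ε)
    (hkey : ε ^ p * (s : ℝ) ^ ((2 - p) / 2) ≤ 2) :
    ε • pConvexHull p (sparseSet d s ∩ euclBall d) ⊆ Cset d p ε := by
  rintro x hx
  obtain ⟨y, hy, rfl⟩ := hx
  obtain ⟨m, lam, t, htm, hlam0, hlamsum, rfl⟩ := hy
  set y := ∑ j, lam j • t j with hydef
  have hlamp_nonneg : ∀ j, (0:ℝ) ≤ lam j ^ p := fun j => Real.rpow_nonneg (hlam0 j) p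
  have hlam_le1 : ∀ j, lam j ≤ 1 := by
    intro j
    by_contra hgt
    push_neg at hgt
    have h1 : 1 < lam j ^ p :=
      (Real.one_lt_rpow_iff_of_pos (lt_trans one_pos hgt)).2 (Or.inl ⟨hgt, hp0⟩)
    have h2 : lam j ^ p ≤ 1 := by
      rw [← hlamsum]
      exact Finset.single_le_sum (fun j _ => hlamp_nonneg j) (Finset.mem_univ j)
    linarith
  have hlam_le : ∀ j, lam j ≤ lam j ^ p :=
    fun j => self_le_rpow hp0 hp1.le (hlam0 j) (hlam_le1 j)
  have he2y : e2 y ≤ 1 := by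
    calc e2 y ≤ ∑ j, e2 (lam j • t j) := e2_sum_le _ _
      _ = ∑ j, lam j * e2 (t j) := by
          refine Finset.sum_congr rfl fun j _ => ?_
          rw [e2_smul, abs_of_nonneg (hlam0 j)]
      _ ≤ ∑ j, lam j ^ p := by
          refine Finset.sum_le_sum fun j _ => ?_
          calc lam j * e2 (t j) ≤ lam j * 1 :=
                mul_le_mul_of_nonneg_left ((mem_euclBall_iff).1 (htm j).2) (hlam0 j)
            _ = lam j := mul_one _
            _ ≤ lam j ^ p := hlam_le j
      _ = 1 := hlamsum
  constructor
  · -- ℓp bound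
    have hstep : ∀ i, |(ε • y) i| ^ p = ε ^ p * |y i| ^ p := by
      intro i
      rw [Pi.smul_apply, smul_eq_mul, abs_mul, abs_of_pos hε0,
        Real.mul_rpow hε0.le (abs_nonneg _)]
    calc ∑ i, |(ε • y) i| ^ p = ε ^ p * ∑ i, |y i| ^ p := by
          rw [Finset.mul_sum]; exact Finset.sum_congr rfl fun i _ => hstep i
      _ ≤ ε ^ p * ((s:ℝ) ^ ((2 - p) / 2)) := by
          refine mul_le_mul_of_nonneg_left ?_ (Real.rpow_nonneg hε0.le p)
          calc ∑ i, |y i| ^ p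
              ≤ ∑ i, ∑ j, (lam j) ^ p * |t j i| ^ p := by
                refine Finset.sum_le_sum fun i _ => ?_
                have hyi : y i = ∑ j, lam j * t j i := by
                  rw [hydef, Finset.sum_apply]
                  exact Finset.sum_congr rfl fun j _ => rfl
                rw [hyi]
                refine le_trans (abs_sum_rpow_le hp0 hp1.le _ _) ?_
                refine Finset.sum_le_sum fun j _ => le_of_eq ?_
                rw [abs_mul, Real.mul_rpow (abs_nonneg _) (abs_nonneg _),
                  abs_of_nonneg (hlam0 j)]
            _ = ∑ j, (lam j) ^ p * ∑ i, |t j i| ^ p := by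
                rw [Finset.sum_comm]
                exact Finset.sum_congr rfl fun j _ => (Finset.mul_sum _ _ _).symm
            _ ≤ ∑ j, (lam j) ^ p * ((s:ℝ) ^ ((2 - p) / 2)) := by
                refine Finset.sum_le_sum fun j _ => ?_
                exact mul_le_mul_of_nonneg_left
                  (sparse_sum_rpow hp0 (by linarith) (htm j)) (hlamp_nonneg j)
            _ = (s:ℝ) ^ ((2 - p) / 2) := by
                rw [← Finset.sum_mul, hlamsum, one_mul]
      _ ≤ 2 := hkey
  · -- ℓ2 bound
    show Real.sqrt (∑ i, (ε • y) i ^ 2) ≤ ε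
    have : Real.sqrt (∑ i, (ε • y) i ^ 2) = e2 (ε • y) := rfl
    rw [this, e2_smul, abs_of_pos hε0]
    calc ε * e2 y ≤ ε * 1 := mul_le_mul_of_nonneg_left he2y hε0.le
      _ = ε := mul_one ε

lemma l1_div_sqrt_bound (hp0 : 0 < p) (hp1 : p < 1) (hε0 : 0 < ε)
    (hkeyB : 1 / Real.sqrt s ≤ ε ^ (p / (2 - p))) {x : Fin d → ℝ}
    (hx : x ∈ Cset d p ε) : l1 x / Real.sqrt s ≤ 2 * ε := by
  have h2p : (0:ℝ) < 2 - p := by linarith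
  obtain ⟨hx1, hx2⟩ := hx
  have hsum2 : ∑ i, x i ^ 2 ≤ ε ^ 2 := sum_sq_le_of_e2_le hε0.le hx2
  have hl1 : l1 x ≤ 2 ^ (1/(2-p)) * (ε ^ 2) ^ ((1 - p)/(2 - p)) := by
    refine le_trans (l1_le_interp hp0 hp1 x) ?_
    refine mul_le_mul ?_ ?_ (Real.rpow_nonneg (Finset.sum_nonneg fun i _ => sq_nonneg _) _)
      (Real.rpow_nonneg (by norm_num) _)
    · refine Real.rpow_le_rpow (Finset.sum_nonneg fun i _ => Real.rpow_nonneg (abs_nonneg _) _)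
        hx1 (div_nonneg (by norm_num) (by linarith))
    · exact Real.rpow_le_rpow (Finset.sum_nonneg fun i _ => sq_nonneg _) hsum2
        (div_nonneg (by linarith) (by linarith))
  have hl1' : 0 ≤ 2 ^ (1/(2-p)) * (ε ^ 2) ^ ((1 - p)/(2 - p)) := by positivity
  calc l1 x / Real.sqrt s = l1 x * (1 / Real.sqrt s) := by rw [mul_one_div]
    _ ≤ (2 ^ (1/(2-p)) * (ε ^ 2) ^ ((1 - p)/(2 - p))) * ε ^ (p / (2 - p)) := by
        refine mul_le_mul hl1 hkeyB ?_ hl1'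
        positivity
    _ = 2 ^ (1/(2-p)) * ε := by
        rw [mul_assoc]
        congr 1
        rw [← Real.rpow_natCast ε 2, ← Real.rpow_mul hε0.le, ← Real.rpow_add hε0]
        have : (2:ℕ) * ((1 - p)/(2 - p)) + p / (2 - p) = 1 := by
          push_cast; field_simp; ring
        rw [this, Real.rpow_one]
    _ ≤ 2 * ε := by
        refine mul_le_mul_of_nonneg_right ?_ hε0.le
        calc (2:ℝ) ^ (1/(2-p)) ≤ 2 ^ (1:ℝ) := by
              refine Real.rpow_le_rpow_of_exponent_le one_le_two ?_
              rw [div_le_one h2p]; linarith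
          _ = 2 := Real.rpow_one 2

lemma incl2 (hp0 : 0 < p) (hp1 : p < 1) (hε0 : 0 < ε) (hs1 : 1 ≤ s)
    (hkeyB : 1 / Real.sqrt s ≤ ε ^ (p / (2 - p))) :
    Cset d p ε ⊆ (3 * ε) • convexHull ℝ (sparseSet d s ∩ euclBall d) := by
  intro x hx
  have hrep := rep_total hs1 x
  have hb1 : e2 x ≤ ε := hx.2
  have hb2 : l1 x / Real.sqrt s ≤ 2 * ε := l1_div_sqrt_bound hp0 hp1 hε0 hkeyB hx
  exact (hrep.mono (by linarith)).mem_smul_convexHull (by linarith)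

end LpLocal
namespace LpLocal

open Finset MeasureTheory ProbabilityTheory

variable {d : ℕ}

/-! ### Cauchy–Schwarz with square roots -/

lemma cs_sqrt (S : Finset (Fin d)) (f g : Fin d → ℝ) :
    ∑ i ∈ S, f i * g i ≤
      Real.sqrt (∑ i ∈ S, f i ^ 2) * Real.sqrt (∑ i ∈ S, g i ^ 2) := by
  have h := Finset.sum_mul_sq_le_sq_mul_sq S f g
  calc ∑ i ∈ S, f i * g i ≤ |∑ i ∈ S, f i * g i| := le_abs_self _
    _ = Real.sqrt ((∑ i ∈ S, f i * g i) ^ 2) := (Real.sqrt_sq_eq_abs _).symm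
    _ ≤ Real.sqrt ((∑ i ∈ S, f i ^ 2) * ∑ i ∈ S, g i ^ 2) := Real.sqrt_le_sqrt h
    _ = _ := Real.sqrt_mul (Finset.sum_nonneg fun i _ => sq_nonneg _) _

/-! ### Gaussian integrability -/

lemma stdGaussian_map_eval (i : Fin d) :
    (stdGaussian d).map (fun ξ => ξ i) = gaussianReal 0 1 := by
  ext A hA
  rw [_root_.stdGaussian, Measure.map_apply (measurable_pi_apply i) hA]
  have hpre : (fun ξ : Fin d → ℝ => ξ i) ⁻¹' A =
      Set.univ.pi (Function.update (fun _ : Fin d => (Set.univ : Set ℝ)) i A) := by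
    ext ξ
    simp only [Set.mem_preimage, Set.mem_pi, Set.mem_univ, forall_true_left,
      Function.update_apply]
    constructor
    · intro h j
      by_cases hj : j = i
      · subst hj; simp [h]
      · simp [hj]
    · intro h
      have := h i
      simpa using this
  rw [hpre, Measure.pi_pi]
  rw [Finset.prod_eq_single i]
  · simp
  · intro j _ hj
    simp [Function.update_apply, hj]
  · simp

lemma integrable_sq_gaussian : Integrable (fun x : ℝ => x ^ 2) (gaussianReal 0 1) := by
  rw [gaussianReal_of_var_ne_zero _ one_ne_zero]
  rw [integrable_withDensity_iff_integrable_smul' (measurable_gaussianPDF _ _)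
    (ae_of_all _ fun x => by simp [gaussianPDF])]
  have hbase : Integrable (fun x : ℝ => x ^ (2:ℝ) * Real.exp (-(1/2) * x ^ 2)) :=
    integrable_rpow_mul_exp_neg_mul_sq (by norm_num) (by norm_num)
  have hbase2 : Integrable (fun x : ℝ => (Real.sqrt (2 * Real.pi))⁻¹ *
      (x ^ 2 * Real.exp (-(1/2) * x ^ 2))) := by
    refine Integrable.const_mul ?_ _
    have : (fun x : ℝ => x ^ 2 * Real.exp (-(1/2) * x ^ 2)) =
        fun x : ℝ => x ^ (2:ℝ) * Real.exp (-(1/2) * x ^ 2) := by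
      funext x
      rw [Real.rpow_two]
    rw [this]
    exact hbase
  refine hbase2.congr (ae_of_all _ fun x => ?_)
  have hnn := gaussianPDFReal_nonneg 0 1 x
  simp only [smul_eq_mul, gaussianPDF, ENNReal.toReal_ofReal hnn]
  rw [gaussianPDFReal]
  push_cast
  rw [mul_one, sub_zero, show -x ^ 2 / (2*1) = -(1/2) * x ^ 2 by ring]
  ring

lemma integrable_eval_sq (i : Fin d) :
    Integrable (fun ξ : Fin d → ℝ => ξ i ^ 2) (stdGaussian d) := by
  have h : Integrable (fun x : ℝ => x ^ 2) ((stdGaussian d).map (fun ξ => ξ i)) := by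
    rw [stdGaussian_map_eval]
    exact integrable_sq_gaussian
  have := (integrable_map_measure
    (f := fun ξ : Fin d → ℝ => ξ i) (g := fun x : ℝ => x ^ 2)
    (by exact (continuous_pow 2).aestronglyMeasurable)
    (measurable_pi_apply i).aemeasurable).1 h
  exact this

lemma integrable_sum_sq :
    Integrable (fun ξ : Fin d → ℝ => ∑ i, ξ i ^ 2) (stdGaussian d) :=
  integrable_finset_sum _ fun i _ => integrable_eval_sq i

/-! ### Continuity of finite sups -/

lemma continuous_sup' {ι : Type*} {X : Type*} [TopologicalSpace X] (Q : Finset ι)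
    (hQ : Q.Nonempty) (g : ι → X → ℝ) (hg : ∀ i, Continuous (g i)) :
    Continuous fun ξ => Q.sup' hQ fun i => g i ξ := by
  induction hQ using Finset.Nonempty.cons_induction with
  | singleton a => simpa using hg a
  | cons a t ha ht ih =>
    have : (fun ξ => (Finset.cons a t ha).sup' (Finset.cons_nonempty ha) fun i => g i ξ) =
        fun ξ => max (g a ξ) (t.sup' ht fun i => g i ξ) := by
      funext ξ
      rw [Finset.sup'_cons]
    rw [this]
    exact (hg a).max ih

end LpLocal
open LpLocal in
/-- Sharp local structure of ℓp balls for `p ∈ (0,1)`: with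
`s = ⌈ε^{-2p/(2-p)}⌉` one has
`ε·conv_p(B₀(s) ∩ B₂) ⊆ C_d(p,ε) ⊆ 3ε·conv(B₀(s) ∩ B₂)`, and consequently the second
moment of `Φ_{p,ε}` is, up to a factor `9`, given by `ε²·E[max_{|S| ≤ s} ‖ξ_S‖₂²]`. -/
theorem local_structure_lp_ball (d : ℕ) (hd : 1 ≤ d) (p : ℝ) (hp0 : 0 < p) (hp1 : p < 1)
    (ε : ℝ) (hε1 : (d : ℝ) ^ (-((2 - p) / (2 * p))) ≤ ε) (hε2 : ε ≤ 1)
    (s : ℕ) (hs : s = ⌈ε ^ (-(2 * p) / (2 - p))⌉₊) :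
    (ε • pConvexHull p (sparseSet d s ∩ euclBall d) ⊆ Cset d p ε ∧
      Cset d p ε ⊆ (3 * ε) • convexHull ℝ (sparseSet d s ∩ euclBall d)) ∧
    (ε ^ 2 *
        ∫ ξ, (⨆ S ∈ {S : Finset (Fin d) | S.card ≤ s}, ∑ i ∈ S, ξ i ^ 2) ∂(stdGaussian d)
      ≤ ∫ ξ, Phi p ε ξ ^ 2 ∂(stdGaussian d) ∧
      ∫ ξ, Phi p ε ξ ^ 2 ∂(stdGaussian d)
      ≤ 9 * ε ^ 2 *
        ∫ ξ, (⨆ S ∈ {S : Finset (Fin d) | S.card ≤ s}, ∑ i ∈ S, ξ i ^ 2)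
          ∂(stdGaussian d)) := by
  classical
  have hp2 : p < 2 := by linarith
  have hε0 : 0 < ε :=
    lt_of_lt_of_le (Real.rpow_pos_of_pos (by exact_mod_cast hd) _) hε1
  have hs1 : 1 ≤ s := by
    rw [hs]
    exact Nat.ceil_pos.2 (Real.rpow_pos_of_pos hε0 _)
  have hkeyA := keyA hp0 hp1 hε0 hε2 hs
  have hkeyB := keyB hp0 hp1 hε0 hs
  have hincl1 := incl1 (d := d) hp0 hp1 hε0 hkeyA
  have hincl2 := incl2 (d := d) hp0 hp1 hε0 hs1 hkeyB
  refine ⟨⟨hincl1, hincl2⟩, ?_⟩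
  -- the sup over sparse subsets, as a finite `sup'`
  set P : Finset (Finset (Fin d)) := Finset.univ.filter (fun S => S.card ≤ s) with hPdef
  have hPne : P.Nonempty := ⟨∅, by simp [hPdef]⟩
  have hPmem : ∀ S : Finset (Fin d), S ∈ P ↔ S.card ≤ s := fun S => by simp [hPdef]
  set N : (Fin d → ℝ) → ℝ := fun ξ => P.sup' hPne (fun S => ∑ i ∈ S, ξ i ^ 2) with hNdef
  have hN0 : ∀ ξ, 0 ≤ N ξ := fun ξ => by
    simp only [hNdef]
    exact le_trans (le_of_eq (Finset.sum_empty (f := fun i => ξ i ^ 2)).symm)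
      (Finset.le_sup' (fun S => ∑ i ∈ S, ξ i ^ 2) ((hPmem ∅).2 (by simp)))
  have hNle : ∀ ξ : Fin d → ℝ, N ξ ≤ ∑ i, ξ i ^ 2 := fun ξ =>
    Finset.sup'_le _ _ fun S _ => Finset.sum_le_sum_of_subset_of_nonneg
      (Finset.subset_univ S) (fun i _ _ => sq_nonneg _)
  have hNcont : Continuous N := continuous_sup' P hPne _
    (fun S => continuous_finset_sum _ fun i _ => (continuous_apply i).pow 2)
  have hMN : (fun ξ : Fin d → ℝ =>
      ⨆ S ∈ {S : Finset (Fin d) | S.card ≤ s}, ∑ i ∈ S, ξ i ^ 2) = N := by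
    funext ξ
    simp only [hNdef]
    apply le_antisymm
    · refine ciSup_le fun S => ?_
      by_cases hS : S.card ≤ s
      · rw [ciSup_pos (show S ∈ {S : Finset (Fin d) | S.card ≤ s} from hS)]
        exact Finset.le_sup' (fun S => ∑ i ∈ S, ξ i ^ 2) ((hPmem S).2 hS)
      · haveI : IsEmpty (S ∈ {S : Finset (Fin d) | S.card ≤ s}) := ⟨fun h => hS h⟩
        rw [Real.iSup_of_isEmpty]
        exact hN0 ξ
    · refine Finset.sup'_le _ _ fun S hS => ?_
      have hSc : S.card ≤ s := (hPmem S).1 hS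
      have hb : BddAbove (Set.range fun S : Finset (Fin d) =>
          ⨆ (_ : S ∈ {S : Finset (Fin d) | S.card ≤ s}), ∑ i ∈ S, ξ i ^ 2) :=
        (Set.finite_range _).bddAbove
      refine le_trans ?_ (le_ciSup hb S)
      rw [ciSup_pos (show S ∈ {S : Finset (Fin d) | S.card ≤ s} from hSc)]
  rw [hMN]
  -- basic facts about `Phi`
  have h0C : (0 : Fin d → ℝ) ∈ Cset d p ε := by
    refine ⟨?_, ?_⟩ <;>
      simp [Real.zero_rpow hp0.ne', hε0.le]
  have hbddPhi : ∀ ξ : Fin d → ℝ, BddAbove ((fun x => ∑ i, x i * ξ i) '' Cset d p ε) := by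
    intro ξ
    refine ⟨ε * Real.sqrt (∑ i, ξ i ^ 2), ?_⟩
    rintro v ⟨x, hx, rfl⟩
    calc ∑ i, x i * ξ i
        ≤ Real.sqrt (∑ i, x i ^ 2) * Real.sqrt (∑ i, ξ i ^ 2) := cs_sqrt Finset.univ x ξ
      _ ≤ ε * Real.sqrt (∑ i, ξ i ^ 2) :=
          mul_le_mul_of_nonneg_right hx.2 (Real.sqrt_nonneg _)
  have hPhi0 : ∀ ξ, 0 ≤ Phi p ε ξ := fun ξ =>
    le_csSup (hbddPhi ξ) ⟨0, h0C, by simp⟩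
  -- pointwise lower bound
  have hlow : ∀ ξ, ε ^ 2 * N ξ ≤ Phi p ε ξ ^ 2 := by
    intro ξ
    obtain ⟨S, hSP, hNS⟩ := Finset.exists_mem_eq_sup' hPne (fun S => ∑ i ∈ S, ξ i ^ 2)
    have hNξ : N ξ = ∑ i ∈ S, ξ i ^ 2 := hNS
    rw [hNξ]
    set r := Real.sqrt (∑ i ∈ S, ξ i ^ 2) with hr
    have hr0 : 0 ≤ r := Real.sqrt_nonneg _
    have hr2 : r ^ 2 = ∑ i ∈ S, ξ i ^ 2 :=
      Real.sq_sqrt (Finset.sum_nonneg fun i _ => sq_nonneg _)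
    rcases hr0.eq_or_lt with h | hrpos
    · rw [← hr2, ← h]
      simpa using sq_nonneg (Phi p ε ξ)
    · set x : Fin d → ℝ := fun i => if i ∈ S then ε * ξ i / r else 0 with hx
      have hxsupp : supp x ⊆ S := by
        intro i hi
        rw [mem_supp] at hi
        by_contra hiS
        exact hi (by simp [hx, hiS])
      have hxsq : ∑ i, x i ^ 2 = ε ^ 2 := by
        have h1 : ∑ i, x i ^ 2 = ∑ i ∈ S, (ε * ξ i / r) ^ 2 := by
          calc ∑ i, x i ^ 2 = ∑ i, (if i ∈ S then (ε * ξ i / r) ^ 2 else 0) := by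
                refine Finset.sum_congr rfl fun i _ => ?_
                by_cases hi : i ∈ S <;> simp [hx, hi]
            _ = ∑ i ∈ Finset.univ ∩ S, (ε * ξ i / r) ^ 2 := Finset.sum_ite_mem _ _ _
            _ = ∑ i ∈ S, (ε * ξ i / r) ^ 2 := by rw [Finset.univ_inter]
        rw [h1]
        have h2 : ∀ i, (ε * ξ i / r) ^ 2 = ε ^ 2 / r ^ 2 * ξ i ^ 2 := by
          intro i; field_simp
        rw [Finset.sum_congr rfl fun i _ => h2 i, ← Finset.mul_sum, ← hr2]
        field_simp
      have hxC : x ∈ Cset d p ε :=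
        mem_Cset_sparse hp0 hp2 hε0.le hkeyA
          (le_trans (Finset.card_le_card hxsupp) ((hPmem S).1 hSP)) hxsq.le
      have hdot : ∑ i, x i * ξ i = ε * r := by
        have h1 : ∑ i, x i * ξ i = ∑ i ∈ S, (ε * ξ i / r) * ξ i := by
          calc ∑ i, x i * ξ i = ∑ i, (if i ∈ S then (ε * ξ i / r) * ξ i else 0) := by
                refine Finset.sum_congr rfl fun i _ => ?_
                by_cases hi : i ∈ S <;> simp [hx, hi]
            _ = ∑ i ∈ Finset.univ ∩ S, (ε * ξ i / r) * ξ i := Finset.sum_ite_mem _ _ _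
            _ = ∑ i ∈ S, (ε * ξ i / r) * ξ i := by rw [Finset.univ_inter]
        rw [h1]
        have h2 : ∀ i, (ε * ξ i / r) * ξ i = ε / r * ξ i ^ 2 := by
          intro i; field_simp
        rw [Finset.sum_congr rfl fun i _ => h2 i, ← Finset.mul_sum, ← hr2]
        field_simp
      have hle : ε * r ≤ Phi p ε ξ := le_csSup (hbddPhi ξ) ⟨x, hxC, hdot⟩
      calc ε ^ 2 * ∑ i ∈ S, ξ i ^ 2 = (ε * r) ^ 2 := by rw [← hr2]; ring
        _ ≤ Phi p ε ξ ^ 2 := pow_le_pow_left₀ (mul_nonneg hε0.le hr0) hle 2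
  -- pointwise upper bound
  have hup : ∀ ξ, Phi p ε ξ ^ 2 ≤ 9 * ε ^ 2 * N ξ := by
    intro ξ
    have hsqN : Real.sqrt (N ξ) ^ 2 = N ξ := Real.sq_sqrt (hN0 ξ)
    have h1 : Phi p ε ξ ≤ 3 * ε * Real.sqrt (N ξ) := by
      refine Real.sSup_le ?_
        (mul_nonneg (mul_nonneg (by norm_num) hε0.le) (Real.sqrt_nonneg _))
      rintro v ⟨x, hxC, rfl⟩
      obtain ⟨y, hy, rfl⟩ := hincl2 hxC
      rw [convexHull_eq] at hy
      obtain ⟨ι, Q, w, z, hw0, hw1, hzT, hyc⟩ := hy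
      have hdots : ∀ j ∈ Q, ∑ i, z j i * ξ i ≤ Real.sqrt (N ξ) := by
        intro j hj
        obtain ⟨hz1, hz2⟩ := hzT j hj
        have hz1' : (supp (z j)).card ≤ s := (mem_sparseSet_iff).1 hz1
        have hsub : ∑ i, z j i * ξ i = ∑ i ∈ supp (z j), z j i * ξ i := by
          refine (Finset.sum_subset (Finset.subset_univ _) fun i _ hi => ?_).symm
          rw [not_mem_supp.1 hi, zero_mul]
        rw [hsub]
        calc ∑ i ∈ supp (z j), z j i * ξ i
            ≤ Real.sqrt (∑ i ∈ supp (z j), z j i ^ 2) *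
              Real.sqrt (∑ i ∈ supp (z j), ξ i ^ 2) := cs_sqrt _ _ _
          _ ≤ 1 * Real.sqrt (N ξ) := by
              refine mul_le_mul ?_ ?_ (Real.sqrt_nonneg _) (by norm_num)
              · rw [show (1:ℝ) = Real.sqrt 1 from Real.sqrt_one.symm]
                refine Real.sqrt_le_sqrt ?_
                refine le_trans (Finset.sum_le_sum_of_subset_of_nonneg (Finset.subset_univ _)
                  fun i _ _ => sq_nonneg _) ?_
                simpa using sum_sq_le_of_e2_le zero_le_one ((mem_euclBall_iff).1 hz2)
              · refine Real.sqrt_le_sqrt ?_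
                exact Finset.le_sup' (f := fun S => ∑ i ∈ S, ξ i ^ 2) ((hPmem _).2 hz1')
          _ = Real.sqrt (N ξ) := one_mul _
      have hyeq : y = ∑ j ∈ Q, w j • z j := by
        rw [← hyc, Finset.centerMass_eq_of_sum_1 _ _ hw1]
      have hyval : ∑ i, y i * ξ i ≤ Real.sqrt (N ξ) := by
        calc ∑ i, y i * ξ i = ∑ j ∈ Q, w j * ∑ i, z j i * ξ i := by
              rw [hyeq]
              simp only [Finset.sum_apply, Pi.smul_apply, smul_eq_mul]
              rw [Finset.sum_congr rfl fun i (_ : i ∈ Finset.univ) =>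
                Finset.sum_mul Q (fun j => w j * z j i) (ξ i)]
              rw [Finset.sum_comm]
              exact Finset.sum_congr rfl fun j _ => by
                rw [Finset.mul_sum]
                exact Finset.sum_congr rfl fun i _ => by ring
          _ ≤ ∑ j ∈ Q, w j * Real.sqrt (N ξ) :=
              Finset.sum_le_sum fun j hj =>
                mul_le_mul_of_nonneg_left (hdots j hj) (hw0 j hj)
          _ = Real.sqrt (N ξ) := by rw [← Finset.sum_mul, hw1, one_mul]
      calc ∑ i, ((3 * ε) • y) i * ξ i = (3 * ε) * ∑ i, y i * ξ i := by
            rw [Finset.mul_sum]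
            exact Finset.sum_congr rfl fun i _ => by
              rw [Pi.smul_apply, smul_eq_mul]; ring
        _ ≤ (3 * ε) * Real.sqrt (N ξ) :=
            mul_le_mul_of_nonneg_left hyval (by linarith)
        _ = 3 * ε * Real.sqrt (N ξ) := by ring
    calc Phi p ε ξ ^ 2 ≤ (3 * ε * Real.sqrt (N ξ)) ^ 2 :=
          pow_le_pow_left₀ (hPhi0 ξ) h1 2
      _ = 9 * ε ^ 2 * N ξ := by rw [mul_pow, mul_pow, hsqN]; ring
  -- Lipschitz continuity of Phi
  have hlip : ∀ ξ ξ' : Fin d → ℝ,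
      Phi p ε ξ ≤ Phi p ε ξ' + (ε * Real.sqrt d) * dist ξ ξ' := by
    intro ξ ξ'
    have hd0 : (0:ℝ) ≤ dist ξ ξ' := dist_nonneg
    refine Real.sSup_le ?_ ?_
    · rintro v ⟨x, hx, rfl⟩
      have hl1x : l1 x ≤ ε * Real.sqrt d := by
        have h := cs_sqrt Finset.univ (fun i => |x i|) (fun _ => (1:ℝ))
        simp only [mul_one, one_pow, sq_abs, Finset.sum_const, Finset.card_univ,
          Fintype.card_fin, nsmul_eq_mul] at h
        calc l1 x ≤ Real.sqrt (∑ i, x i ^ 2) * Real.sqrt d := by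
              simpa [l1] using h
          _ ≤ ε * Real.sqrt d := mul_le_mul_of_nonneg_right hx.2 (Real.sqrt_nonneg _)
      have hstep : ∑ i, x i * (ξ i - ξ' i) ≤ l1 x * dist ξ ξ' := by
        calc ∑ i, x i * (ξ i - ξ' i) ≤ ∑ i, |x i * (ξ i - ξ' i)| :=
              Finset.sum_le_sum fun i _ => le_abs_self _
          _ = ∑ i, |x i| * |ξ i - ξ' i| := by
              exact Finset.sum_congr rfl fun i _ => abs_mul _ _
          _ ≤ ∑ i, |x i| * dist ξ ξ' := by
              refine Finset.sum_le_sum fun i _ => ?_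
              refine mul_le_mul_of_nonneg_left ?_ (abs_nonneg _)
              rw [← Real.dist_eq]
              exact dist_le_pi_dist ξ ξ' i
          _ = l1 x * dist ξ ξ' := by rw [l1, ← Finset.sum_mul]
      have hdiff : ∑ i, x i * ξ i = ∑ i, x i * ξ' i + ∑ i, x i * (ξ i - ξ' i) := by
        rw [← Finset.sum_add_distrib]
        exact Finset.sum_congr rfl fun i _ => by ring
      have hmem' : ∑ i, x i * ξ' i ≤ Phi p ε ξ' := le_csSup (hbddPhi ξ') ⟨x, hx, rfl⟩
      have hmul := mul_le_mul_of_nonneg_right hl1x hd0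
      calc ∑ i, x i * ξ i = ∑ i, x i * ξ' i + ∑ i, x i * (ξ i - ξ' i) := hdiff
        _ ≤ Phi p ε ξ' + l1 x * dist ξ ξ' := add_le_add hmem' hstep
        _ ≤ Phi p ε ξ' + (ε * Real.sqrt d) * dist ξ ξ' := by linarith
    · have h1 : 0 ≤ (ε * Real.sqrt d) * dist ξ ξ' :=
        mul_nonneg (mul_nonneg hε0.le (Real.sqrt_nonneg _)) hd0
      linarith [hPhi0 ξ']
  have hPhicont : Continuous (Phi p ε) :=
    (LipschitzWith.of_le_add_mul' (ε * Real.sqrt d) hlip).continuous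
  -- integrability
  have hNint : Integrable N (stdGaussian d) := by
    refine (integrable_sum_sq).mono' hNcont.aestronglyMeasurable (ae_of_all _ fun ξ => ?_)
    rw [Real.norm_eq_abs, abs_of_nonneg (hN0 ξ)]
    exact hNle ξ
  have hPhiint : Integrable (fun ξ => Phi p ε ξ ^ 2) (stdGaussian d) := by
    refine (hNint.const_mul (9 * ε ^ 2)).mono' ((hPhicont.pow 2).aestronglyMeasurable)
      (ae_of_all _ fun ξ => ?_)
    rw [Real.norm_eq_abs, abs_of_nonneg (sq_nonneg _)]
    exact hup ξ
  constructor
  · have h := integral_mono (μ := stdGaussian d) (hNint.const_mul (ε ^ 2)) hPhiint hlow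
    rw [MeasureTheory.integral_const_mul] at h
    exact h
  · have h := integral_mono (μ := stdGaussian d) hPhiint (hNint.const_mul (9 * ε ^ 2)) hup
    rw [MeasureTheory.integral_const_mul] at h
    exact h
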